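/- Let A be a real symmetric m×m positive semidefinite matrix, B real symmetric and psd on Null(A), and suppose A + εB is positive semidefinite for all small ε > 0. Then for all sufficiently small ε > 0, Null(A + εB) ⊆ Null(A); moreover the containment is strict if z·Bz does not vanish identically on Null(A). -/

import Mathlib

open Matrix

theorem null_space_perturbation {m : ℕ} (A B : Matrix (Fin m) (Fin m) ℝ)
    (hA : A.PosSemidef) (hB : B.IsSymm)
    (hBnull : ∀ z : Fin m → ℝ, A.mulVec z = 0 → 0 ≤ z ⬝ᵥ B.mulVec z)
    (hpsd : ∃ ε₀ > 0, ∀ ε : ℝ, 0 < ε → ε ≤ ε₀ → (A + ε • B).PosSemidef) :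
    ∃ ε₀ > 0, ∀ ε : ℝ, 0 < ε → ε ≤ ε₀ →
      ({z : Fin m → ℝ | (A + ε • B).mulVec z = 0} ⊆ {z | A.mulVec z = 0} ∧
       ((¬ ∀ z : Fin m → ℝ, A.mulVec z = 0 → z ⬝ᵥ B.mulVec z = 0) →
         {z : Fin m → ℝ | (A + ε • B).mulVec z = 0} ⊂ {z | A.mulVec z = 0})) := by
  obtain ⟨ε₀, hε₀, hps⟩ := hpsd
  refine ⟨ε₀ / 2, by linarith, fun ε hε hεle => ?_⟩
  have hsub : {z : Fin m → ℝ | (A + ε • B).mulVec z = 0} ⊆ {z | A.mulVec z = 0} := by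
    intro z hz
    simp only [Set.mem_setOf_eq] at hz ⊢
    have hexp : (A + ε • B).mulVec z = A.mulVec z + ε • B.mulVec z := by
      rw [add_mulVec, smul_mulVec]
    have h0 : z ⬝ᵥ A.mulVec z + ε * (z ⬝ᵥ B.mulVec z) = 0 := by
      have := congrArg (fun v => z ⬝ᵥ v) (hexp ▸ hz)
      simpa [dotProduct_add, dotProduct_smul, smul_eq_mul] using this
    have hA0 : 0 ≤ z ⬝ᵥ A.mulVec z := hA.dotProduct_mulVec_nonneg z
    have hM : (A + (2 * ε) • B).PosSemidef := hps (2 * ε) (by linarith) (by linarith)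
    have hM0 : 0 ≤ z ⬝ᵥ (A + (2 * ε) • B).mulVec z := hM.dotProduct_mulVec_nonneg z
    have hM0' : 0 ≤ z ⬝ᵥ A.mulVec z + 2 * ε * (z ⬝ᵥ B.mulVec z) := by
      have hexp2 : (A + (2 * ε) • B).mulVec z = A.mulVec z + (2 * ε) • B.mulVec z := by
        rw [add_mulVec, smul_mulVec]
      rw [hexp2] at hM0
      simpa [dotProduct_add, dotProduct_smul, smul_eq_mul] using hM0
    have hAz0 : z ⬝ᵥ A.mulVec z = 0 := by nlinarith
    have := (hA.dotProduct_mulVec_zero_iff z).mp (by simpa using hAz0)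
    simpa using this
  refine ⟨hsub, fun hne => ⟨hsub, ?_⟩⟩
  push_neg at hne
  obtain ⟨z, hAz, hBz⟩ := hne
  intro hcontra
  have hz : (A + ε • B).mulVec z = 0 := hcontra hAz
  have : A.mulVec z + ε • B.mulVec z = 0 := by
    rwa [add_mulVec, smul_mulVec] at hz
  rw [hAz, zero_add] at this
  have hBz0 : B.mulVec z = 0 := by
    have := congrArg (fun v => ε⁻¹ • v) this
    simpa [smul_smul, inv_mul_cancel₀ hε.ne'] using this
  exact hBz (by rw [hBz0, dotProduct_zero])
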